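/- Let G be a connected graph, c : E → ℕ, and let k ≥ 1. Suppose c(e) ≤ k for all e, and let G* be the graph on vertex set V* (obtained from V by removing all endpoints of edges e with c(e) = k) with edge set E* = { uv ∈ E : c(uv) = k − 1 and u, v ∈ V* }. Then a set S ⊆ V of size exactly k is a monitoring set of the complete graph on V with weights c (setting c = 0 on non-edges of G) if and only if S is an independent set of G* of size k. -/

import Mathlib

open scoped Classical

/-- `S` is a monitoring set of `(G, c)`: every edge `{x, y}` of `G` is monitored by at least
`c {x, y}` vertices of `S`, where a vertex `v` monitors `{x, y}` if `v` is adjacent to both. -/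
def monitoringSet {V : Type*} (G : SimpleGraph V) (c : Sym2 V → ℕ) (S : Set V) : Prop :=
  ∀ x y, G.Adj x y → c s(x, y) ≤ {v ∈ S | G.Adj v x ∧ G.Adj v y}.ncard

/-- The set `V*`: vertices of `G` that are not endpoints of an edge `e` with `c e = k`. -/
def Vstar {V : Type*} (G : SimpleGraph V) (c : Sym2 V → ℕ) (k : ℕ) : Set V :=
  {v : V | ∀ x, G.Adj v x → c s(v, x) ≠ k}

/-- The graph `G*` with edges `uv ∈ E` such that `c uv = k - 1` and `u, v ∈ V*`. -/
def Gstar {V : Type*} (G : SimpleGraph V) (c : Sym2 V → ℕ) (k : ℕ) : SimpleGraph V :=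
  SimpleGraph.fromRel (fun u v =>
    G.Adj u v ∧ c s(u, v) = k - 1 ∧ u ∈ Vstar G c k ∧ v ∈ Vstar G c k)

theorem stmt14 {V : Type*} [Fintype V] (G : SimpleGraph V) (hconn : G.Connected)
    (c : Sym2 V → ℕ) (k : ℕ) (hk : 1 ≤ k)
    (hck : ∀ e ∈ G.edgeSet, c e ≤ k)
    (S : Set V) (hcard : S.ncard = k) :
    monitoringSet (⊤ : SimpleGraph V) (fun e => if e ∈ G.edgeSet then c e else 0) S ↔
      (S ⊆ Vstar G c k ∧ ∀ u ∈ S, ∀ v ∈ S, ¬ (Gstar G c k).Adj u v) := by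
  have hSfin : S.Finite := Set.toFinite S
  have hset : ∀ x y : V,
      {v ∈ S | (⊤ : SimpleGraph V).Adj v x ∧ (⊤ : SimpleGraph V).Adj v y} = S \ {x, y} := by
    intro x y
    ext v
    simp only [SimpleGraph.top_adj, Set.mem_setOf_eq, Set.mem_diff, Set.mem_insert_iff,
      Set.mem_singleton_iff]
    tauto
  have hkey : ∀ x y : V, (S \ {x, y}).ncard + (S ∩ {x, y}).ncard = k := by
    intro x y
    have hu : (S \ {x, y}) ∪ (S ∩ {x, y}) = S := Set.diff_union_inter S {x, y}
    rw [← Set.ncard_union_eq (Set.disjoint_left.mpr fun a ha hb => ha.2 hb.2)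
      hSfin.diff (hSfin.inter_of_left _), hu, hcard]
  constructor
  · intro hmon
    have hmon' : ∀ x y : V, x ≠ y → (if s(x, y) ∈ G.edgeSet then c s(x, y) else 0)
        ≤ (S \ {x, y}).ncard := by
      intro x y hxy
      have := hmon x y hxy
      rwa [hset] at this
    constructor
    · intro v hv x hvx hc
      have h := hmon' v x hvx.ne
      rw [if_pos (G.mem_edgeSet.mpr hvx), hc] at h
      have hpos : 0 < (S ∩ {v, x}).ncard :=
        (Set.ncard_pos (hSfin.inter_of_left _)).mpr ⟨v, hv, by simp⟩
      have hk2 := hkey v x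
      omega
    · intro u hu v hv hadj
      rw [Gstar, SimpleGraph.fromRel_adj] at hadj
      obtain ⟨hne, hrel⟩ := hadj
      have hGadj : G.Adj u v := by
        rcases hrel with h | h
        · exact h.1
        · exact h.1.symm
      have hc1 : c s(u, v) = k - 1 := by
        rcases hrel with h | h
        · exact h.2.1
        · rw [Sym2.eq_swap]; exact h.2.1
      have h := hmon' u v hne
      rw [if_pos (G.mem_edgeSet.mpr hGadj), hc1] at h
      have hUV : S ∩ {u, v} = {u, v} := by
        apply Set.inter_eq_right.mpr
        intro a ha
        rcases ha with ha | ha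
        · exact ha ▸ hu
        · simp only [Set.mem_singleton_iff] at ha; exact ha ▸ hv
      have h2 : (S ∩ {u, v}).ncard = 2 := by rw [hUV, Set.ncard_pair hne]
      have hk2 := hkey u v
      omega
  · rintro ⟨hV, hind⟩ x y hxy
    simp only []
    rw [hset]
    have hxy' : x ≠ y := hxy
    by_cases he : s(x, y) ∈ G.edgeSet
    · simp only [if_pos he]
      have hGadj : G.Adj x y := he
      have hck' := hck _ he
      have hk2 := hkey x y
      by_cases hx : x ∈ S <;> by_cases hy : y ∈ S
      · have hcne : c s(x, y) ≠ k := hV hx y hGadj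
        have hcne1 : c s(x, y) ≠ k - 1 := by
          intro hc1
          exact hind x hx y hy (by
            rw [Gstar, SimpleGraph.fromRel_adj]
            exact ⟨hxy', Or.inl ⟨hGadj, hc1, hV hx, hV hy⟩⟩)
        have hUV : S ∩ {x, y} = {x, y} := by
          apply Set.inter_eq_right.mpr
          intro a ha
          rcases ha with ha | ha
          · exact ha ▸ hx
          · simp only [Set.mem_singleton_iff] at ha; exact ha ▸ hy
        have h2 : (S ∩ {x, y}).ncard = 2 := by rw [hUV, Set.ncard_pair hxy']
        omega
      · have hcne : c s(x, y) ≠ k := hV hx y hGadj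
        have hUV : S ∩ {x, y} = {x} := by
          ext a
          simp only [Set.mem_inter_iff, Set.mem_insert_iff, Set.mem_singleton_iff]
          constructor
          · rintro ⟨ha, h | h⟩
            · exact h
            · exact absurd (h ▸ ha) hy
          · rintro rfl; exact ⟨hx, Or.inl rfl⟩
        have h1 : (S ∩ {x, y}).ncard = 1 := by rw [hUV, Set.ncard_singleton]
        omega
      · have hcne : c s(x, y) ≠ k := by
          intro hc
          exact hV hy x hGadj.symm (by rwa [Sym2.eq_swap])
        have hUV : S ∩ {x, y} = {y} := by
          ext a
          simp only [Set.mem_inter_iff, Set.mem_insert_iff, Set.mem_singleton_iff]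
          constructor
          · rintro ⟨ha, h | h⟩
            · exact absurd (h ▸ ha) hx
            · exact h
          · rintro rfl; exact ⟨hy, Or.inr rfl⟩
        have h1 : (S ∩ {x, y}).ncard = 1 := by rw [hUV, Set.ncard_singleton]
        omega
      · have hUV : S ∩ {x, y} = ∅ := by
          ext a
          simp only [Set.mem_inter_iff, Set.mem_insert_iff, Set.mem_singleton_iff,
            Set.mem_empty_iff_false, iff_false, not_and]
          rintro ha (rfl | rfl)
          · exact hx ha
          · exact hy ha
        have h0 : (S ∩ {x, y}).ncard = 0 := by rw [hUV, Set.ncard_empty]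
        omega
    · simp only [if_neg he]
      exact Nat.zero_le _
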